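/- Let n ≥ 1, L ≥ 2r_0 > 0, and let x = (x_1,...,x_n), y = (y_1,...,y_n) ∈ (ℝ^d)^n with |x - y|_∞ ≥ 7nL. Assume both configurations are fully interactive, i.e. max_{i≠j} |x_i - x_j|_∞ ≤ n(2L + r_0) and max_{i≠j} |y_i - y_j|_∞ ≤ n(2L + r_0). Then the projections are disjoint: (∪_{i=1}^n C_L(x_i)) ∩ (∪_{j=1}^n C_L(y_j)) = ∅; in fact min_{i,j} dist(C_L(x_i), C_L(y_j)) ≥ 2(n-1)L. -/
import Mathlib


open Metric Set

/-- Two fully interactive configurations at sup-distance at least `7nL`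
have disjoint projections; in fact the cubes `C_L(x_i)` and `C_L(y_j)` are at pairwise
distance at least `2(n-1)L`. -/
theorem fully_interactive_disjoint_projections
    (d n : ℕ) (hn : 1 ≤ n) (r0 L : ℝ) (hr0 : 0 < r0) (hL : 2 * r0 ≤ L)
    (x y : Fin n → Fin d → ℝ)
    (hdist : 7 * n * L ≤ dist x y)
    (hxFI : ∀ i j, dist (x i) (x j) ≤ n * (2 * L + r0))
    (hyFI : ∀ i j, dist (y i) (y j) ≤ n * (2 * L + r0)) :
    ((⋃ i, closedBall (x i) L) ∩ ⋃ j, closedBall (y j) L) = ∅ ∧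
      ∀ i j, ∀ p ∈ closedBall (x i) L, ∀ q ∈ closedBall (y j) L,
        2 * ((n : ℝ) - 1) * L ≤ dist p q := by
  have hLpos : 0 < L := lt_of_lt_of_le (by linarith) hL
  have hn1 : (1:ℝ) ≤ (n:ℝ) := by exact_mod_cast hn
  haveI : Nonempty (Fin n) := ⟨⟨0, hn⟩⟩
  obtain ⟨i0, -, hi0⟩ := Finset.exists_max_image Finset.univ
    (fun i => dist (x i) (y i)) ⟨Classical.arbitrary (Fin n), Finset.mem_univ _⟩
  have hmax : dist x y ≤ dist (x i0) (y i0) := by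
    refine (dist_pi_le_iff dist_nonneg).mpr ?_
    intro i
    exact hi0 i (Finset.mem_univ i)
  have hbig : 7 * (n:ℝ) * L ≤ dist (x i0) (y i0) := hdist.trans hmax
  have key : ∀ i j, 2 * (n:ℝ) * L ≤ dist (x i) (y j) := by
    intro i j
    have h1 := hxFI i0 i
    have h2 := hyFI j i0
    have htri : dist (x i0) (y i0) ≤
        dist (x i0) (x i) + dist (x i) (y j) + dist (y j) (y i0) :=
      dist_triangle4 _ _ _ _
    nlinarith [hbig]
  have key2 : ∀ i j, 2 * L < dist (x i) (y j) := by
    intro i j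
    rcases eq_or_lt_of_le hn with h | h
    · -- n = 1
      have hsub : Subsingleton (Fin n) := by
        subst h; infer_instance
      have hi : i = i0 := Subsingleton.elim _ _
      have hj : j = i0 := Subsingleton.elim _ _
      subst hi; subst hj
      calc 2*L < 7*(n:ℝ)*L := by nlinarith
        _ ≤ _ := hbig
    · have h2 : (2:ℝ) ≤ (n:ℝ) := by exact_mod_cast h
      nlinarith [key i j]
  refine ⟨?_, ?_⟩
  · ext z
    simp only [mem_inter_iff, mem_iUnion, mem_closedBall, mem_empty_iff_false, iff_false,
      not_and, not_exists]
    rintro ⟨i, hi⟩ j hj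
    have hk := key2 i j
    have htri := dist_triangle (x i) z (y j)
    rw [dist_comm] at hi
    linarith
  · intro i j p hp q hq
    simp only [mem_closedBall] at hp hq
    have hk := key i j
    have htri := dist_triangle4 (x i) p q (y j)
    rw [dist_comm (x i) p] at htri
    nlinarith
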